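/- For t ∈ (0,1) and w with t(1+(1-t)w) ∈ [0,1], exp(nt(1-t)w·∇̃_n) applied to the constant function 1 evaluates at k to (1+(1-t)w)^k·(1-tw)^{n-k}, for k ∈ {0,...,n}. Equivalently, b_{n,t(1+(1-t)w)}(k)/b_{n,t}(k) = (1+(1-t)w)^k(1-tw)^{n-k}. -/

import Mathlib

open Finset

/-- The matrix of the operator `∇̃_n` on functions `{0,...,n} → ℝ`:
`(∇̃_n f)(k) = (k/n)((1-t)/t)f(k-1) − ((n-2k)/n)f(k) − ((n-k)/n)(t/(1-t))f(k+1)`. -/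
noncomputable def tildeMat (n : ℕ) (t : ℝ) : Matrix (Fin (n + 1)) (Fin (n + 1)) ℝ :=
  fun k j =>
    if (j : ℕ) + 1 = (k : ℕ) then (k : ℝ) / n * ((1 - t) / t)
    else if (j : ℕ) = (k : ℕ) then -(((n : ℝ) - 2 * k) / n)
    else if (j : ℕ) = (k : ℕ) + 1 then -(((n : ℝ) - k) / n * (t / (1 - t)))
    else 0

noncomputable def gfun (n : ℕ) (t s : ℝ) : Fin (n + 1) → ℝ :=
  fun k => (1 + (1 - t) * s) ^ (k : ℕ) * (1 - t * s) ^ (n - (k : ℕ))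

noncomputable def extv (n : ℕ) (v : Fin (n + 1) → ℝ) (m : ℕ) : ℝ :=
  if h : m < n + 1 then v ⟨m, h⟩ else 0

lemma sum_ite_val (n : ℕ) (f : Fin (n + 1) → ℝ) (m : ℕ) :
    ∑ j : Fin (n + 1), (if (j : ℕ) = m then f j else 0)
      = if h : m < n + 1 then f ⟨m, h⟩ else 0 := by
  split_ifs with h
  · rw [Finset.sum_eq_single_of_mem ⟨m, h⟩ (Finset.mem_univ _)]
    · simp
    · intro j _ hj
      exact if_neg (fun hc => hj (Fin.ext hc))
  · exact Finset.sum_eq_zero fun j _ => if_neg (by have := j.isLt; omega)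

lemma mulVec_tilde (n : ℕ) (t : ℝ) (v : Fin (n + 1) → ℝ) (k : Fin (n + 1)) :
    (tildeMat n t).mulVec v k
      = ((k : ℕ) : ℝ) / n * ((1 - t) / t) * extv n v ((k : ℕ) - 1)
        - ((n : ℝ) - 2 * ((k : ℕ) : ℝ)) / n * v k
        - ((n : ℝ) - ((k : ℕ) : ℝ)) / n * (t / (1 - t)) * extv n v ((k : ℕ) + 1) := by
  have hsplit : ∀ j : Fin (n + 1), tildeMat n t k j * v j =
      (if (j : ℕ) + 1 = (k : ℕ) then (((k : ℕ) : ℝ) / n * ((1 - t) / t)) * v j else 0)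
      + (if (j : ℕ) = (k : ℕ) then (-(((n : ℝ) - 2 * ((k : ℕ) : ℝ)) / n)) * v j else 0)
      + (if (j : ℕ) = (k : ℕ) + 1 then (-(((n : ℝ) - ((k : ℕ) : ℝ)) / n * (t / (1 - t)))) * v j
          else 0) := by
    intro j
    simp only [tildeMat]
    split_ifs with h1 h2 h3 <;> first | (exfalso; omega) | ring
  have hmv : (tildeMat n t).mulVec v k = ∑ j : Fin (n + 1), tildeMat n t k j * v j := rfl
  rw [hmv, Finset.sum_congr rfl (fun j _ => hsplit j), Finset.sum_add_distrib,
    Finset.sum_add_distrib]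
  have h2 : ∑ j : Fin (n + 1), (if (j : ℕ) = (k : ℕ)
        then (-(((n : ℝ) - 2 * ((k : ℕ) : ℝ)) / n)) * v j else 0)
      = -(((n : ℝ) - 2 * ((k : ℕ) : ℝ)) / n) * v k := by
    rw [sum_ite_val, dif_pos k.isLt]
  have h3 : ∑ j : Fin (n + 1), (if (j : ℕ) = (k : ℕ) + 1
        then (-(((n : ℝ) - ((k : ℕ) : ℝ)) / n * (t / (1 - t)))) * v j else 0)
      = -(((n : ℝ) - ((k : ℕ) : ℝ)) / n * (t / (1 - t))) * extv n v ((k : ℕ) + 1) := by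
    rw [sum_ite_val, extv]
    split_ifs with h <;> ring
  rw [h2, h3]
  rcases Nat.eq_zero_or_pos (k : ℕ) with hk | hk
  · have h1 : ∑ j : Fin (n + 1), (if (j : ℕ) + 1 = (k : ℕ)
        then (((k : ℕ) : ℝ) / n * ((1 - t) / t)) * v j else 0) = 0 :=
      Finset.sum_eq_zero fun j _ => if_neg (by omega)
    rw [h1, hk]
    push_cast
    ring
  · have h1 : ∑ j : Fin (n + 1), (if (j : ℕ) + 1 = (k : ℕ)
        then (((k : ℕ) : ℝ) / n * ((1 - t) / t)) * v j else 0)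
        = (((k : ℕ) : ℝ) / n * ((1 - t) / t)) * extv n v ((k : ℕ) - 1) := by
      have hc : ∀ j : Fin (n + 1), ((j : ℕ) + 1 = (k : ℕ)) = ((j : ℕ) = (k : ℕ) - 1) := by
        intro j; apply propext; omega
      simp only [hc]
      rw [sum_ite_val, extv, dif_pos (by omega : (k : ℕ) - 1 < n + 1),
        dif_pos (by omega : (k : ℕ) - 1 < n + 1)]
    rw [h1]
    ring

lemma gfun_hasDerivAt (n : ℕ) (hn : 1 ≤ n) (t : ℝ) (ht0 : 0 < t) (ht1 : t < 1) (s : ℝ) :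
    HasDerivAt (fun u => gfun n t u)
      ((((n : ℝ) * t * (1 - t)) • tildeMat n t).mulVec (gfun n t s)) s := by
  rw [hasDerivAt_pi]
  intro k
  have hKn : (k : ℕ) ≤ n := by have := k.isLt; omega
  have ha : HasDerivAt (fun u : ℝ => 1 + (1 - t) * u) (1 - t) s := by
    simpa using ((hasDerivAt_id s).const_mul (1 - t)).const_add 1
  have hb : HasDerivAt (fun u : ℝ => 1 - t * u) (-t) s := by
    simpa using ((hasDerivAt_id s).const_mul t).const_sub 1
  have h := (ha.pow (k : ℕ)).mul (hb.pow (n - (k : ℕ)))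
  have hcomp : (fun u : ℝ => gfun n t u k)
      = fun u : ℝ => (1 + (1 - t) * u) ^ (k : ℕ) * (1 - t * u) ^ (n - (k : ℕ)) := rfl
  rw [hcomp]
  convert h using 1
  · rfl
  · rfl
  simp only [Pi.pow_apply]
  rw [Matrix.smul_mulVec, Pi.smul_apply, smul_eq_mul, mulVec_tilde]
  have hne : (n : ℝ) ≠ 0 := by positivity
  have htne : t ≠ 0 := ne_of_gt ht0
  have h1t : (1 : ℝ) - t ≠ 0 := by linarith
  set a : ℝ := 1 + (1 - t) * s with hadef
  set b : ℝ := 1 - t * s with hbdef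
  have hgk : gfun n t s k = a ^ (k : ℕ) * b ^ (n - (k : ℕ)) := rfl
  rcases Nat.eq_zero_or_pos (k : ℕ) with hk0 | hkpos
  · -- k = 0
    obtain ⟨m, hm⟩ : ∃ m, n = m + 1 := ⟨n - 1, by omega⟩
    have e1 : extv n (gfun n t s) ((k : ℕ) + 1) = a ^ 1 * b ^ m := by
      rw [extv, dif_pos (by omega : (k : ℕ) + 1 < n + 1)]
      show a ^ ((k : ℕ) + 1) * b ^ (n - ((k : ℕ) + 1)) = _
      rw [show (k : ℕ) + 1 = 1 by omega, show n - 1 = m by omega]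
    rw [e1, hgk, hk0]
    simp only [Nat.sub_zero, pow_zero, pow_one, Nat.cast_zero]
    rw [hm, Nat.add_sub_cancel, pow_succ b m]
    have hm1 : (m : ℝ) + 1 ≠ 0 := by positivity
    push_cast
    field_simp
    ring
  · rcases Nat.lt_or_ge (k : ℕ) n with hklt | hke
    · -- 0 < k < n
      obtain ⟨i, hi⟩ : ∃ i, (k : ℕ) = i + 1 := ⟨(k : ℕ) - 1, by omega⟩
      obtain ⟨m, hm⟩ : ∃ m, n - (k : ℕ) = m + 1 := ⟨n - (k : ℕ) - 1, by omega⟩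
      have hnim : n = i + m + 2 := by omega
      have e0 : extv n (gfun n t s) ((k : ℕ) - 1) = a ^ i * b ^ (m + 2) := by
        rw [extv, dif_pos (by omega : (k : ℕ) - 1 < n + 1)]
        show a ^ ((k : ℕ) - 1) * b ^ (n - ((k : ℕ) - 1)) = _
        rw [show (k : ℕ) - 1 = i by omega, show n - i = m + 2 by omega]
      have e1 : extv n (gfun n t s) ((k : ℕ) + 1) = a ^ (i + 2) * b ^ m := by
        rw [extv, dif_pos (by omega : (k : ℕ) + 1 < n + 1)]
        show a ^ ((k : ℕ) + 1) * b ^ (n - ((k : ℕ) + 1)) = _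
        rw [show (k : ℕ) + 1 = i + 2 by omega, show n - (i + 2) = m by omega]
      rw [e0, e1, hgk]
      rw [show n - (k : ℕ) - 1 = m by omega, show n - (k : ℕ) = m + 1 from hm,
        show (k : ℕ) - 1 = i by omega, hi]
      rw [hnim]
      rw [pow_succ b m, pow_succ a i, show i + 2 = (i + 1) + 1 from rfl,
        pow_succ a (i + 1), pow_succ a i, pow_succ b (m + 1), pow_succ b m]
      have him : (i : ℝ) + (m : ℝ) + 2 ≠ 0 := by positivity
      push_cast
      field_simp
      ring
    · -- k = n
      have hkn : (k : ℕ) = n := le_antisymm hKn hke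
      obtain ⟨i, hi⟩ : ∃ i, n = i + 1 := ⟨n - 1, by omega⟩
      have e0 : extv n (gfun n t s) ((k : ℕ) - 1) = a ^ i * b ^ 1 := by
        rw [extv, dif_pos (by omega : (k : ℕ) - 1 < n + 1)]
        show a ^ ((k : ℕ) - 1) * b ^ (n - ((k : ℕ) - 1)) = _
        rw [show (k : ℕ) - 1 = i by omega, show n - i = 1 by omega]
      have e1 : extv n (gfun n t s) ((k : ℕ) + 1) = 0 := by
        rw [extv, dif_neg (by omega)]
      rw [e0, e1, hgk, hkn]
      rw [show n - n - 1 = 0 by omega, show n - n = 0 by omega]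
      simp only [pow_zero, pow_one, Nat.cast_zero]
      rw [hi, Nat.add_sub_cancel, pow_succ a i]
      have hi1 : (i : ℝ) + 1 ≠ 0 := by positivity
      push_cast
      field_simp
      ring

section ExpSection

attribute [local instance] Matrix.linftyOpNormedRing Matrix.linftyOpNormedAlgebra

noncomputable def entryCLM (n : ℕ) (p q : Fin (n + 1)) :
    Matrix (Fin (n + 1)) (Fin (n + 1)) ℝ →L[ℝ] ℝ :=
  LinearMap.toContinuousLinearMap
    { toFun := fun A => A p q
      map_add' := fun _ _ => rfl
      map_smul' := fun _ _ => rfl }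

lemma exp_mulVec (n : ℕ) (hn : 1 ≤ n) (t : ℝ) (ht0 : 0 < t) (ht1 : t < 1) (w : ℝ) :
    (NormedSpace.exp (w • (((n : ℝ) * t * (1 - t)) • tildeMat n t))).mulVec
        (fun _ => (1 : ℝ)) = gfun n t w := by
  set B := ((n : ℝ) * t * (1 - t)) • tildeMat n t with hB
  set F : ℝ → Fin (n + 1) → ℝ :=
    fun s => (NormedSpace.exp ((w - s) • B)).mulVec (gfun n t s) with hF
  have hFderiv : ∀ (s : ℝ) (k : Fin (n + 1)), HasDerivAt (fun u => F u k) 0 s := by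
    intro s k
    have hE : HasDerivAt (fun u : ℝ => NormedSpace.exp ((w - u) • B))
        (-(NormedSpace.exp ((w - s) • B) * B)) s := by
      have h1 := hasDerivAt_exp_smul_const (𝕂 := ℝ) B (w - s)
      have h2 : HasDerivAt (fun u : ℝ => w - u) (-1 : ℝ) s := (hasDerivAt_id s).const_sub w
      have h3 := h1.scomp s h2
      exact h3.congr_deriv (g' := -(NormedSpace.exp ((w - s) • B) * B)) (by simp; rfl)
    have hEkj : ∀ j : Fin (n + 1),
        HasDerivAt (fun u => (NormedSpace.exp ((w - u) • B)) k j)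
          ((-(NormedSpace.exp ((w - s) • B) * B)) k j) s := by
      intro j
      have := (entryCLM n k j).hasFDerivAt.comp_hasDerivAt s hE
      exact this
    have hgj : ∀ j : Fin (n + 1),
        HasDerivAt (fun u => gfun n t u j) (B.mulVec (gfun n t s) j) s :=
      hasDerivAt_pi.mp (gfun_hasDerivAt n hn t ht0 ht1 s)
    have hsum : HasDerivAt
        (fun u => ∑ j : Fin (n + 1), (NormedSpace.exp ((w - u) • B)) k j * gfun n t u j)
        (∑ j : Fin (n + 1), ((-(NormedSpace.exp ((w - s) • B) * B)) k j * gfun n t s j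
          + (NormedSpace.exp ((w - s) • B)) k j * B.mulVec (gfun n t s) j)) s :=
      HasDerivAt.fun_sum fun j _ => (hEkj j).fun_mul (hgj j)
    have hfun : (fun u => F u k)
        = fun u => ∑ j : Fin (n + 1), (NormedSpace.exp ((w - u) • B)) k j * gfun n t u j := rfl
    have hval : (∑ j : Fin (n + 1), ((-(NormedSpace.exp ((w - s) • B) * B)) k j * gfun n t s j
          + (NormedSpace.exp ((w - s) • B)) k j * B.mulVec (gfun n t s) j)) = 0 := by
      rw [Finset.sum_add_distrib]
      have e1 : ∑ j : Fin (n + 1),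
          (-(NormedSpace.exp ((w - s) • B) * B)) k j * gfun n t s j
          = -((NormedSpace.exp ((w - s) • B) * B).mulVec (gfun n t s) k) := by
        simp only [Matrix.neg_apply, neg_mul, Finset.sum_neg_distrib]
        rfl
      have e2 : ∑ j : Fin (n + 1),
          (NormedSpace.exp ((w - s) • B)) k j * B.mulVec (gfun n t s) j
          = (NormedSpace.exp ((w - s) • B) * B).mulVec (gfun n t s) k := by
        rw [← Matrix.mulVec_mulVec]
        rfl
      rw [e1, e2, neg_add_cancel]
    rw [hfun]
    rw [← hval]
    exact hsum
  have hconst : ∀ k : Fin (n + 1), F 0 k = F w k := fun k =>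
    is_const_of_deriv_eq_zero (fun s => (hFderiv s k).differentiableAt)
      (fun s => (hFderiv s k).deriv) 0 w
  funext k
  have hg0 : gfun n t 0 = fun _ => (1 : ℝ) := by
    funext j; simp [gfun]
  have h0 : F 0 k = (NormedSpace.exp (w • B)).mulVec (fun _ => (1 : ℝ)) k := by
    simp only [hF, sub_zero, hg0]
  have hw' : F w k = gfun n t w k := by
    simp only [hF, sub_self, zero_smul, NormedSpace.exp_zero, Matrix.one_mulVec]
  rw [← h0, hconst k, hw']

end ExpSection

/-- `exp(nt(1-t)w·∇̃_n)` applied to the constant function `1` evaluates at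
`k` to `(1+(1-t)w)^k (1-tw)^{n-k}`; equivalently, this equals the ratio
`b_{n,t(1+(1-t)w)}(k)/b_{n,t}(k)`. -/
theorem stmt19 (n : ℕ) (hn : 1 ≤ n) (t : ℝ) (ht : t ∈ Set.Ioo (0 : ℝ) 1) (w : ℝ)
    (hw : t * (1 + (1 - t) * w) ∈ Set.Icc (0 : ℝ) 1) (k : Fin (n + 1)) :
    (NormedSpace.exp ((((n : ℝ) * t * (1 - t) * w)) • tildeMat n t)).mulVec
        (fun _ => (1 : ℝ)) k
      = (1 + (1 - t) * w) ^ (k : ℕ) * (1 - t * w) ^ (n - (k : ℕ)) ∧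
    ((n.choose k : ℝ) * (t * (1 + (1 - t) * w)) ^ (k : ℕ) *
          (1 - t * (1 + (1 - t) * w)) ^ (n - (k : ℕ))) /
        ((n.choose k : ℝ) * t ^ (k : ℕ) * (1 - t) ^ (n - (k : ℕ)))
      = (1 + (1 - t) * w) ^ (k : ℕ) * (1 - t * w) ^ (n - (k : ℕ)) := by
  obtain ⟨ht0, ht1⟩ := ht
  constructor
  · have hsm : (((n : ℝ) * t * (1 - t) * w)) • tildeMat n t
        = w • (((n : ℝ) * t * (1 - t)) • tildeMat n t) := by
      rw [smul_smul]
      congr 1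
      ring
    rw [hsm]
    exact congrFun (exp_mulVec n hn t ht0 ht1 w) k
  · have hkn : (k : ℕ) ≤ n := by have := k.isLt; omega
    have hchoose : (n.choose (k : ℕ) : ℝ) ≠ 0 :=
      Nat.cast_ne_zero.mpr (Nat.choose_pos hkn).ne'
    have htne : t ≠ 0 := ne_of_gt ht0
    have h1t : (1 : ℝ) - t ≠ 0 := by linarith
    rw [show (1 : ℝ) - t * (1 + (1 - t) * w) = (1 - t) * (1 - t * w) by ring, mul_pow, mul_pow]
    field_simp
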